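/- Let n ≥ 2 and let L be the subgroup of ℤ^{2n} consisting of all vectors v such that v_{2i−1} + v_{2i} ≡ v_{2j−1} + v_{2j} (mod 2) for all 1 ≤ i, j ≤ n. Then the 2n vectors e_{2i−1} − e_{2i} (for 1 ≤ i ≤ n), 2·e_{2k−1} (for 1 ≤ k ≤ n−1), and e₁ + e₃ + ⋯ + e_{2n−1} form a ℤ-basis of L. (This is the basis of the character group T_G^* of a maximal torus of (GL₂)ⁿ/μ computed in display (4.3) of Proposition 4.1 of the paper.) -/
import Mathlib

private lemma sumA (n : ℕ) (c : Fin n → ℤ) (j : Fin n) (t : Fin 2) :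
    (∑ i, c i * (if ((j,t) : Fin n × Fin 2) = (i,(0:Fin 2)) then (1:ℤ)
        else if ((j,t) : Fin n × Fin 2) = (i,1) then -1 else 0))
      = if t = 0 then c j else -c j := by
  fin_cases t <;> simp only [Fin.zero_eta, Fin.mk_one, Fin.isValue]
  · have : ∀ i : Fin n, (c i * (if ((j,(0:Fin 2)) : Fin n × Fin 2) = (i,(0:Fin 2)) then (1:ℤ)
        else if ((j,(0:Fin 2)) : Fin n × Fin 2) = (i,1) then -1 else 0))
        = if j = i then c i else 0 := by
      intro i
      by_cases h : j = i <;> simp [h, Prod.ext_iff]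
    rw [Finset.sum_congr rfl (fun i _ => this i)]
    simp [Finset.sum_ite_eq']
  · have : ∀ i : Fin n, (c i * (if ((j,(1:Fin 2)) : Fin n × Fin 2) = (i,(0:Fin 2)) then (1:ℤ)
        else if ((j,(1:Fin 2)) : Fin n × Fin 2) = (i,1) then -1 else 0))
        = if j = i then -c i else 0 := by
      intro i
      by_cases h : j = i <;> simp [h, Prod.ext_iff]
    rw [Finset.sum_congr rfl (fun i _ => this i)]
    simp [Finset.sum_ite_eq']

private lemma sumB (n : ℕ) (d : Fin (n-1) → ℤ) (j : Fin n) (t : Fin 2) :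
    (∑ k, d k * (if ((j,t) : Fin n × Fin 2) = (k.castLE (Nat.sub_le n 1), 0) then (2:ℤ) else 0))
      = if h : j.val < n - 1 ∧ t = 0 then 2 * d ⟨j.val, h.1⟩ else 0 := by
  split_ifs with h
  · obtain ⟨hj, ht⟩ := h
    subst ht
    rw [Finset.sum_eq_single (⟨j.val, hj⟩ : Fin (n-1))]
    · simp [Prod.ext_iff, Fin.ext_iff, mul_comm]
    · intro k _ hk
      have : j ≠ k.castLE (Nat.sub_le n 1) := by
        intro h
        apply hk
        apply Fin.ext
        have := congrArg Fin.val h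
        simpa using this.symm
      simp [Prod.ext_iff, this]
    · simp
  · apply Finset.sum_eq_zero
    intro k _
    have : ¬ (((j,t) : Fin n × Fin 2) = (k.castLE (Nat.sub_le n 1), 0)) := by
      rintro ⟨⟩
      exact h ⟨k.isLt, rfl⟩
    simp [this]

theorem stmt_7 (n : ℕ) (hn : 2 ≤ n) :
    LinearIndependent ℤ
      (Sum.elim
        (fun i : Fin n => fun p : Fin n × Fin 2 =>
          if p = (i, 0) then (1 : ℤ) else if p = (i, 1) then -1 else 0)
        (Sum.elim
          (fun k : Fin (n - 1) => fun p : Fin n × Fin 2 =>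
            if p = (k.castLE (Nat.sub_le n 1), 0) then (2 : ℤ) else 0)
          (fun _ : Unit => fun p : Fin n × Fin 2 => if p.2 = 0 then (1 : ℤ) else 0))) ∧
    (Submodule.span ℤ (Set.range
      (Sum.elim
        (fun i : Fin n => fun p : Fin n × Fin 2 =>
          if p = (i, 0) then (1 : ℤ) else if p = (i, 1) then -1 else 0)
        (Sum.elim
          (fun k : Fin (n - 1) => fun p : Fin n × Fin 2 =>
            if p = (k.castLE (Nat.sub_le n 1), 0) then (2 : ℤ) else 0)
          (fun _ : Unit => fun p : Fin n × Fin 2 => if p.2 = 0 then (1 : ℤ) else 0))))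
        : Set (Fin n × Fin 2 → ℤ)) =
      {v : Fin n × Fin 2 → ℤ | ∀ i j : Fin n,
        v (i, 0) + v (i, 1) ≡ v (j, 0) + v (j, 1) [ZMOD 2]} := by
  have hn0 : 0 < n := by omega
  set last : Fin n := ⟨n - 1, by omega⟩ with hlast
  -- key evaluation lemma: the value of a general combination at a point
  have key : ∀ (g : (Fin n ⊕ (Fin (n-1) ⊕ Unit)) → ℤ) (j : Fin n) (t : Fin 2),
      (∑ u, g u • (Sum.elim
        (fun i : Fin n => fun p : Fin n × Fin 2 =>
          if p = (i, 0) then (1 : ℤ) else if p = (i, 1) then -1 else 0)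
        (Sum.elim
          (fun k : Fin (n - 1) => fun p : Fin n × Fin 2 =>
            if p = (k.castLE (Nat.sub_le n 1), 0) then (2 : ℤ) else 0)
          (fun _ : Unit => fun p : Fin n × Fin 2 => if p.2 = 0 then (1 : ℤ) else 0))) u) (j, t)
      = (if t = 0 then g (Sum.inl j) else - g (Sum.inl j))
        + (if h : j.val < n - 1 ∧ t = 0 then 2 * g (Sum.inr (Sum.inl ⟨j.val, h.1⟩)) else 0)
        + (if t = 0 then g (Sum.inr (Sum.inr ())) else 0) := by
    intro g j t
    rw [Finset.sum_apply]
    rw [Fintype.sum_sum_type]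
    simp only [Sum.elim_inl, Sum.elim_inr, Pi.smul_apply, smul_eq_mul]
    rw [Fintype.sum_sum_type]
    simp only [Sum.elim_inl, Sum.elim_inr]
    rw [sumA n (fun i => g (Sum.inl i)) j t, sumB n (fun k => g (Sum.inr (Sum.inl k))) j t]
    have : (∑ x : Unit, g (Sum.inr (Sum.inr x)) * (if ((j,t):Fin n × Fin 2).2 = 0 then (1:ℤ) else 0))
        = if t = 0 then g (Sum.inr (Sum.inr ())) else 0 := by
      split_ifs with h <;> simp [h]
    rw [this]
    ring
  constructor
  · rw [Fintype.linearIndependent_iff]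
    intro g hg
    have hval : ∀ (j : Fin n) (t : Fin 2),
        (if t = 0 then g (Sum.inl j) else - g (Sum.inl j))
        + (if h : j.val < n - 1 ∧ t = 0 then 2 * g (Sum.inr (Sum.inl ⟨j.val, h.1⟩)) else 0)
        + (if t = 0 then g (Sum.inr (Sum.inr ())) else 0) = 0 := by
      intro j t
      rw [← key g j t, hg]
      rfl
    have hA : ∀ j : Fin n, g (Sum.inl j) = 0 := by
      intro j
      have := hval j 1
      simpa using this
    have hC : g (Sum.inr (Sum.inr ())) = 0 := by
      have := hval last 0
      rw [dif_neg (by simp [hlast])] at this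
      simpa [hA] using this
    have hB : ∀ k : Fin (n-1), g (Sum.inr (Sum.inl k)) = 0 := by
      intro k
      have hk := k.isLt
      have := hval (k.castLE (Nat.sub_le n 1)) 0
      rw [dif_pos ⟨by simpa using hk, rfl⟩] at this
      simp only [hA, hC, if_pos rfl, add_zero, zero_add] at this
      have h2 : g (Sum.inr (Sum.inl (⟨(k.castLE (Nat.sub_le n 1)).val, by simpa using hk⟩ : Fin (n-1)))) = g (Sum.inr (Sum.inl k)) := by
        congr 1
      omega
    rintro (i | k | u)
    · exact hA i
    · exact hB k
    · exact hC
  · apply Set.Subset.antisymm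
    · intro x hx
      have hx' := (SetLike.mem_coe).mp hx
      clear hx
      induction hx' using Submodule.span_induction with
      | mem x hmem =>
        obtain ⟨u, rfl⟩ := hmem
        rcases u with i | k | u
        · have hz : ∀ j : Fin n,
              ((if ((j,(0:Fin 2)) : Fin n × Fin 2) = (i, 0) then (1:ℤ) else if ((j,(0:Fin 2)) : Fin n × Fin 2) = (i, 1) then -1 else 0)
              + (if ((j,(1:Fin 2)) : Fin n × Fin 2) = (i, 0) then (1:ℤ) else if ((j,(1:Fin 2)) : Fin n × Fin 2) = (i, 1) then -1 else 0)) = 0 := by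
            intro j
            by_cases h : j = i <;> simp [h, Prod.ext_iff]
          intro a b
          simp only [Sum.elim_inl, Set.mem_setOf_eq]
          rw [hz a, hz b]
        · have hz : ∀ j : Fin n, (2:ℤ) ∣
              ((if ((j,(0:Fin 2)) : Fin n × Fin 2) = (k.castLE (Nat.sub_le n 1), 0) then (2:ℤ) else 0)
              + (if ((j,(1:Fin 2)) : Fin n × Fin 2) = (k.castLE (Nat.sub_le n 1), 0) then (2:ℤ) else 0)) := by
            intro j
            split_ifs <;> norm_num
          intro a b
          simp only [Sum.elim_inr, Set.mem_setOf_eq]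
          exact (Int.modEq_zero_iff_dvd.mpr (hz a)).trans (Int.modEq_zero_iff_dvd.mpr (hz b)).symm
        · intro a b
          simp only [Sum.elim_inr, Set.mem_setOf_eq]
          norm_num
      | zero => intro a b; simp
      | add x y hmx hmy ihx ihy =>
        simp only [Set.mem_setOf_eq] at ihx ihy ⊢
        intro a b
        have := (ihx a b).add (ihy a b)
        simp only [Pi.add_apply]
        simp only [Int.ModEq] at this ⊢
        omega
      | smul c x hmx ih =>
        simp only [Set.mem_setOf_eq] at ih ⊢
        intro a b
        have := (ih a b).mul_left c
        simpa [mul_add] using this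
    · intro v hv
      simp only [Set.mem_setOf_eq] at hv
      rw [SetLike.mem_coe, Submodule.mem_span_range_iff_exists_fun]
      set γ : ℤ := v (last, 0) + v (last, 1) with hγ
      have hdvd : ∀ j : Fin n, (2:ℤ) ∣ (v (j,0) + v (j,1)) - γ := by
        intro j
        exact (hv last j).dvd
      refine ⟨Sum.elim (fun i => -v (i,1))
        (Sum.elim (fun k => ((v (k.castLE (Nat.sub_le n 1),0) + v (k.castLE (Nat.sub_le n 1),1)) - γ)/2)
          (fun _ => γ)), ?_⟩
      funext p
      obtain ⟨j, t⟩ := p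
      rw [key]
      simp only [Sum.elim_inl, Sum.elim_inr]
      fin_cases t <;> simp only [Fin.zero_eta, Fin.mk_one, Fin.isValue]
      · simp only [if_true, and_true, true_and]
        by_cases hj : j.val < n - 1
        · rw [dif_pos hj]
          have hcast : (⟨j.val, hj⟩ : Fin (n-1)).castLE (Nat.sub_le n 1) = j := by
            simp [Fin.ext_iff]
          rw [hcast]
          have h2 := Int.mul_ediv_cancel' (hdvd j)
          omega
        · rw [dif_neg hj]
          have hj' : j = last := by
            simp only [hlast, Fin.ext_iff]
            have := j.isLt
            omega
          rw [hj', hγ]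
          ring
      · simp
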